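/- Let σ be the Fibonacci substitution (σ(1) = 12, σ(2) = 1) and define the sequence of languages 𝔏₀ = {1,2}* (all finite words) and 𝔏_{N+1} = 𝓛(σ(𝔏_N)). Then the sequence (𝔏_N) is decreasing for inclusion and its intersection ⋂_N 𝔏_N equals L^φ, the factorial language of factors of the Fibonacci word. In particular, if a word w is, for every integer m, a factor of σ^m(v) for some word v ∈ {1,2}*, then w is a factor of the Fibonacci word. -/

import Mathlib

/-- The Fibonacci substitution `σ` on the alphabet `Fin 2` (`0` plays the role of the letter
`1` and `1` the role of the letter `2`): `σ(1) = 12`, `σ(2) = 1`. -/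
def fibSub : Fin 2 → List (Fin 2) := fun a => if a = 0 then [0, 1] else [0]

/-- The Fibonacci substitution extended to words by concatenation. -/
def sigmaWord (w : List (Fin 2)) : List (Fin 2) := w.flatMap fibSub

/-- The factorial language `𝓛(L)` generated by a language `L`: all factors (contiguous
subwords) of words of `L`. -/
def FactorialClosure (L : Set (List (Fin 2))) : Set (List (Fin 2)) :=
  {u | ∃ v ∈ L, u <:+: v}

/-- The prefix of length `n` of an infinite word `W`. -/
def prefixWord (W : ℕ → Fin 2) (n : ℕ) : List (Fin 2) := (List.range n).map W

/-- `W` is the Fibonacci word: the infinite fixed point of the Fibonacci substitution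
beginning with the letter `1` (coded by `0 : Fin 2`). -/
def IsFibWord (W : ℕ → Fin 2) : Prop :=
  W 0 = 0 ∧
  ∀ n : ℕ, sigmaWord (prefixWord W n) = prefixWord W (sigmaWord (prefixWord W n)).length

/-- The factorial language of factors of an infinite word `W`. -/
def factorLang (W : ℕ → Fin 2) : Set (List (Fin 2)) :=
  {u | ∃ k : ℕ, u = (List.range u.length).map fun j => W (k + j)}

/-- The iterated languages `𝔏₀ = 𝔏`, `𝔏_{N+1} = 𝓛(σ(𝔏_N))`. -/
def iterLang (L : Set (List (Fin 2))) : ℕ → Set (List (Fin 2))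
  | 0 => L
  | N + 1 => FactorialClosure (sigmaWord '' iterLang L N)

/-! ### Auxiliary lemmas -/

/-- The segment of `W` of length `n` starting at position `k`. -/
def seg (W : ℕ → Fin 2) (k n : ℕ) : List (Fin 2) := (List.range n).map (fun j => W (k + j))

lemma seg_length (W : ℕ → Fin 2) (k n : ℕ) : (seg W k n).length = n := by simp [seg]

lemma seg_append (W : ℕ → Fin 2) (k m n : ℕ) :
    seg W k (m + n) = seg W k m ++ seg W (k + m) n := by
  simp [seg, List.range_add, List.map_map, Function.comp, add_assoc]

lemma prefixWord_eq_seg (W : ℕ → Fin 2) (n : ℕ) : prefixWord W n = seg W 0 n := by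
  simp [prefixWord, seg]

lemma prefixWord_mem (W : ℕ → Fin 2) (n : ℕ) : prefixWord W n ∈ factorLang W := by
  refine ⟨0, ?_⟩
  have h : (prefixWord W n).length = n := by simp [prefixWord]
  rw [h]
  simp [prefixWord]

lemma factorLang_infix {W : ℕ → Fin 2} {u x : List (Fin 2)}
    (hx : x ∈ factorLang W) (h : u <:+: x) : u ∈ factorLang W := by
  obtain ⟨k, hk⟩ := hx
  obtain ⟨s, t, hst⟩ := h
  have hx' : x = seg W k x.length := hk
  rw [← hst] at hx'
  have hlen : (s ++ u ++ t).length = s.length + (u.length + t.length) := by simp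
  rw [hlen, seg_append, seg_append, ← List.append_assoc] at hx'
  have h1 := List.append_inj hx' (by simp [seg_length])
  have h2 := List.append_inj h1.1 (by simp [seg_length])
  exact ⟨k + s.length, h2.2⟩

lemma mem_factorLang_infix_prefix {W : ℕ → Fin 2} {u : List (Fin 2)}
    (hu : u ∈ factorLang W) : ∃ n, u <:+: prefixWord W n := by
  obtain ⟨k, hk⟩ := hu
  have hk' : u = seg W k u.length := hk
  refine ⟨k + u.length, seg W 0 k, [], ?_⟩
  rw [List.append_nil, prefixWord_eq_seg, seg_append, zero_add, ← hk']

lemma sigmaWord_append (u v : List (Fin 2)) :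
    sigmaWord (u ++ v) = sigmaWord u ++ sigmaWord v := List.flatMap_append

lemma sigma_iter_append (m : ℕ) (u v : List (Fin 2)) :
    sigmaWord^[m] (u ++ v) = sigmaWord^[m] u ++ sigmaWord^[m] v := by
  induction m generalizing u v with
  | zero => rfl
  | succ m ih => simp only [Function.iterate_succ_apply, sigmaWord_append, ih]

lemma sigma_infix {u v : List (Fin 2)} (h : u <:+: v) : sigmaWord u <:+: sigmaWord v := by
  obtain ⟨s, t, rfl⟩ := h
  exact ⟨sigmaWord s, sigmaWord t, by rw [← sigmaWord_append, ← sigmaWord_append]⟩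

lemma factorLang_sigma {W : ℕ → Fin 2} (hW : IsFibWord W) {u : List (Fin 2)}
    (h : u ∈ factorLang W) : sigmaWord u ∈ factorLang W := by
  obtain ⟨n, hn⟩ := mem_factorLang_infix_prefix h
  have h3 : sigmaWord u <:+: sigmaWord (prefixWord W n) := sigma_infix hn
  rw [hW.2 n] at h3
  exact factorLang_infix (prefixWord_mem W _) h3

lemma factorLang_sigma_iter {W : ℕ → Fin 2} (hW : IsFibWord W) (m : ℕ) {u : List (Fin 2)}
    (h : u ∈ factorLang W) : sigmaWord^[m] u ∈ factorLang W := by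
  induction m with
  | zero => exact h
  | succ m ih => rw [Function.iterate_succ_apply']; exact factorLang_sigma hW ih

lemma iterA_prefix {W : ℕ → Fin 2} (hW : IsFibWord W) :
    ∀ m : ℕ, ∃ n, sigmaWord^[m] [0] = prefixWord W n := by
  intro m
  induction m with
  | zero =>
      refine ⟨1, ?_⟩
      simp [prefixWord, List.range_succ, hW.1]
  | succ m ih =>
      obtain ⟨n, hn⟩ := ih
      refine ⟨(sigmaWord (prefixWord W n)).length, ?_⟩
      rw [Function.iterate_succ_apply', hn]
      exact hW.2 n

lemma len_le_sigma (u : List (Fin 2)) : u.length ≤ (sigmaWord u).length := by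
  induction u with
  | nil => simp [sigmaWord]
  | cons a t ih =>
      have h : sigmaWord (a :: t) = fibSub a ++ sigmaWord t := rfl
      rw [h, List.length_append, List.length_cons]
      have ha : 1 ≤ (fibSub a).length := by
        unfold fibSub; split <;> simp
      omega

lemma len_le_sigma_iter (m : ℕ) (u : List (Fin 2)) :
    u.length ≤ (sigmaWord^[m] u).length := by
  induction m with
  | zero => exact le_refl _
  | succ m ih =>
      rw [Function.iterate_succ_apply']
      exact ih.trans (len_le_sigma _)

lemma lenA : ∀ m : ℕ, m + 1 ≤ (sigmaWord^[m] ([0] : List (Fin 2))).length := by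
  intro m
  induction m with
  | zero => simp
  | succ m ih =>
      have h1 : sigmaWord^[m+1] ([0] : List (Fin 2)) =
          sigmaWord^[m] [0] ++ sigmaWord^[m] [1] := by
        rw [Function.iterate_succ_apply]
        have h : sigmaWord [0] = ([0] : List (Fin 2)) ++ [1] := rfl
        rw [h, sigma_iter_append]
      rw [h1, List.length_append]
      have h2 : 1 ≤ (sigmaWord^[m] ([1] : List (Fin 2))).length := by
        have := len_le_sigma_iter m ([1] : List (Fin 2))
        simpa using this
      omega

lemma lenB (m : ℕ) : sigmaWord^[m+1] ([1] : List (Fin 2)) = sigmaWord^[m] [0] := by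
  rw [Function.iterate_succ_apply]; rfl

lemma lenB' : ∀ m : ℕ, m ≤ (sigmaWord^[m] ([1] : List (Fin 2))).length := by
  intro m
  cases m with
  | zero => simp
  | succ s => rw [lenB]; exact lenA s

lemma infix_append_cases {α : Type*} {w x y : List α} (h : w <:+: x ++ y) :
    w <:+: x ∨ w <:+: y ∨ ∃ w1 w2, w = w1 ++ w2 ∧ w1 <:+ x ∧ w2 <+: y := by
  obtain ⟨s, t, hst⟩ := h
  rw [List.append_assoc] at hst
  rcases List.append_eq_append_iff.mp hst with ⟨a', hx, hwt⟩ | ⟨c', _, hy⟩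
  · rcases List.append_eq_append_iff.mp hwt with ⟨b', ha, _⟩ | ⟨c', hw, hy⟩
    · left
      exact ⟨s, b', by rw [hx, ha, List.append_assoc]⟩
    · right; right
      exact ⟨a', c', hw, ⟨s, hx.symm⟩, ⟨t, hy.symm⟩⟩
  · right; left
    exact ⟨c', t, by rw [hy, List.append_assoc]⟩

lemma suffix_prefix_infix {α : Type*} {w1 w2 x y : List α}
    (h1 : w1 <:+ x) (h2 : w2 <+: y) : w1 ++ w2 <:+: x ++ y := by
  obtain ⟨u, rfl⟩ := h1
  obtain ⟨z, rfl⟩ := h2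
  exact ⟨u, z, by simp [List.append_assoc]⟩

lemma infix_flatMap {f : Fin 2 → List (Fin 2)} {w : List (Fin 2)}
    (hf : ∀ a, w.length ≤ (f a).length) :
    ∀ v : List (Fin 2), w <:+: v.flatMap f → w = [] ∨ ∃ a b, w <:+: f a ++ f b := by
  intro v
  induction v with
  | nil =>
      intro h
      left
      rw [List.flatMap_nil] at h
      exact List.infix_nil.mp h
  | cons a v' ih =>
      intro h
      have hfm : (a :: v').flatMap f = f a ++ v'.flatMap f := by simp
      rw [hfm] at h
      rcases infix_append_cases h with h | h | ⟨w1, w2, hww, hs, hp⟩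
      · right; exact ⟨a, a, h.trans ⟨[], f a, by simp⟩⟩
      · exact ih h
      · cases v' with
        | nil =>
            simp only [List.flatMap_nil, List.prefix_nil] at hp
            subst hp
            right
            refine ⟨a, a, ?_⟩
            rw [hww, List.append_nil]
            exact hs.isInfix.trans ⟨[], f a, by simp⟩
        | cons b v'' =>
            right
            have hfm2 : (b :: v'').flatMap f = f b ++ v''.flatMap f := by simp
            rw [hfm2] at hp
            have hlen : w2.length ≤ (f b).length := by
              have h1 := hf b
              have h2 : w2.length ≤ w.length := by rw [hww]; simp
              omega
            have hp2 : w2 <+: f b := by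
              have heq := List.prefix_iff_eq_take.mp hp
              rw [List.take_append] at heq
              have h0 : w2.length - (f b).length = 0 := by omega
              rw [h0, List.take_zero, List.append_nil] at heq
              rw [heq]
              exact List.take_prefix _ _
            refine ⟨a, b, ?_⟩
            rw [hww]
            exact suffix_prefix_infix hs hp2

lemma sigma_iter_nil (m : ℕ) : sigmaWord^[m] ([] : List (Fin 2)) = [] := by
  induction m with
  | zero => rfl
  | succ m ih => rw [Function.iterate_succ_apply']; rw [ih]; rfl

lemma iter_flatMap (m : ℕ) (v : List (Fin 2)) :
    sigmaWord^[m] v = v.flatMap (fun a => sigmaWord^[m] [a]) := by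
  induction v with
  | nil => simp [sigma_iter_nil]
  | cons a v' ih =>
      have h : (a :: v') = [a] ++ v' := rfl
      rw [h, sigma_iter_append, ih]
      simp

lemma pair_infix_A4 : ∀ a b : Fin 2, sigmaWord [a, b] <:+: sigmaWord^[4] [0] := by decide

lemma pair_mem {W : ℕ → Fin 2} (hW : IsFibWord W) (m : ℕ) (a b : Fin 2) :
    sigmaWord^[m+1] [a, b] ∈ factorLang W := by
  have hA : sigmaWord^[4] ([0] : List (Fin 2)) ∈ factorLang W := by
    obtain ⟨n, hn⟩ := iterA_prefix hW 4
    rw [hn]; exact prefixWord_mem W n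
  have h1 : sigmaWord [a, b] ∈ factorLang W :=
    factorLang_infix hA (pair_infix_A4 a b)
  rw [Function.iterate_succ_apply]
  exact factorLang_sigma_iter hW m h1

lemma key_lemma {W : ℕ → Fin 2} (hW : IsFibWord W) (w : List (Fin 2))
    (h : ∀ m : ℕ, ∃ v : List (Fin 2), w <:+: sigmaWord^[m] v) : w ∈ factorLang W := by
  rcases eq_or_ne w [] with rfl | hw
  · exact ⟨0, rfl⟩
  obtain ⟨v, hv⟩ := h (w.length + 1)
  rw [iter_flatMap] at hv
  have hf : ∀ a : Fin 2, w.length ≤ (sigmaWord^[w.length + 1] [a]).length := by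
    intro a
    have ha : a = 0 ∨ a = 1 := by fin_cases a <;> simp
    rcases ha with rfl | rfl
    · have := lenA (w.length + 1); omega
    · have := lenB' (w.length + 1); omega
  rcases infix_flatMap hf v hv with h0 | ⟨a, b, hab⟩
  · exact absurd h0 hw
  have heq : sigmaWord^[w.length + 1] ([a] : List (Fin 2)) ++ sigmaWord^[w.length + 1] [b] =
      sigmaWord^[w.length + 1] [a, b] := by
    rw [← sigma_iter_append]
    rfl
  rw [heq] at hab
  exact factorLang_infix (pair_mem hW w.length a b) hab

lemma iterLang_eq : ∀ N : ℕ, iterLang Set.univ N =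
    {w : List (Fin 2) | ∃ v, w <:+: sigmaWord^[N] v} := by
  intro N
  induction N with
  | zero =>
      ext w
      simp only [iterLang, Set.mem_univ, Set.mem_setOf_eq, true_iff]
      exact ⟨w, by simp⟩
  | succ N ih =>
      ext u
      constructor
      · rintro ⟨x, hx, hux⟩
        obtain ⟨y, hy, rfl⟩ := hx
        rw [ih] at hy
        obtain ⟨v, hv⟩ := hy
        refine ⟨v, ?_⟩
        rw [Function.iterate_succ_apply']
        exact hux.trans (sigma_infix hv)
      · rintro ⟨v, hv⟩
        refine ⟨sigmaWord (sigmaWord^[N] v), ⟨sigmaWord^[N] v, ?_, rfl⟩, ?_⟩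
        · rw [ih]; exact ⟨v, List.infix_refl _⟩
        · rw [Function.iterate_succ_apply'] at hv; exact hv

lemma factor_sub {W : ℕ → Fin 2} (hW : IsFibWord W) (N : ℕ) {u : List (Fin 2)}
    (hu : u ∈ factorLang W) : ∃ v, u <:+: sigmaWord^[N] v := by
  obtain ⟨n, hn⟩ := mem_factorLang_infix_prefix hu
  refine ⟨sigmaWord^[n] [0], ?_⟩
  have h1 : sigmaWord^[N] (sigmaWord^[n] ([0] : List (Fin 2))) = sigmaWord^[N + n] [0] :=
    (Function.iterate_add_apply _ N n _).symm
  obtain ⟨k, hk⟩ := iterA_prefix hW (N + n)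
  have hklen : (sigmaWord^[N + n] ([0] : List (Fin 2))).length = k := by
    rw [hk]; simp [prefixWord]
  have hnk : n ≤ k := by
    have := lenA (N + n); omega
  have hpre : prefixWord W n <+: prefixWord W k := by
    rw [prefixWord_eq_seg, prefixWord_eq_seg]
    have hkn : k = n + (k - n) := by omega
    rw [hkn, seg_append]
    exact List.prefix_append _ _
  rw [h1, hk]
  exact hn.trans hpre.isInfix

/-- Starting from `𝔏₀ = {1,2}*` (all finite words) and iterating
`𝔏_{N+1} = 𝓛(σ(𝔏_N))`, the sequence of languages is decreasing for inclusion and its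
intersection is the factor language of the Fibonacci word `W`.  In particular a word which is,
for every `m`, a factor of `σ^m(v)` for some word `v`, is a factor of the Fibonacci word. -/
theorem decreasing_iteration (W : ℕ → Fin 2) (hW : IsFibWord W) :
    (∀ N : ℕ, iterLang Set.univ (N + 1) ⊆ iterLang Set.univ N) ∧
    (⋂ N : ℕ, iterLang Set.univ N) = factorLang W ∧
    (∀ w : List (Fin 2),
      (∀ m : ℕ, ∃ v : List (Fin 2), w <:+: sigmaWord^[m] v) → w ∈ factorLang W) := by
  refine ⟨?_, ?_, fun w h => key_lemma hW w h⟩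
  · intro N w hw
    rw [iterLang_eq] at hw ⊢
    obtain ⟨v, hv⟩ := hw
    refine ⟨sigmaWord v, ?_⟩
    rw [← Function.iterate_succ_apply]
    exact hv
  · ext w
    simp only [Set.mem_iInter]
    constructor
    · intro h
      apply key_lemma hW w
      intro m
      have hm := h m
      rw [iterLang_eq] at hm
      exact hm
    · intro h N
      rw [iterLang_eq]
      exact factor_sub hW N h
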